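/- If there exists a perfect binary sequence of length n, then n is a perfect square (indeed n = (∑_k A(k))², so n is an even square when n > 1). -/

import Mathlib

open Finset

private lemma shift_sum (n : ℕ) (A : ℕ → ℤ) :
    ∀ k, (∑ u ∈ Finset.range n, A ((k + u) % n)) = ∑ u ∈ Finset.range n, A (u % n) := by
  intro k
  induction k with
  | zero => simp
  | succ k ih =>
    have hs := Finset.sum_range_succ' (fun u => A ((k + u) % n)) n
    have hs2 := Finset.sum_range_succ (fun u => A ((k + u) % n)) n
    have hfn : A ((k + n) % n) = A ((k + 0) % n) := by
      simp [Nat.add_mod_right]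
    have h1 : (∑ u ∈ Finset.range n, A ((k + (u + 1)) % n))
        = ∑ u ∈ Finset.range n, A ((k + u) % n) := by
      rw [hs2] at hs
      simp only [hfn] at hs
      linarith
    calc (∑ u ∈ Finset.range n, A ((k + 1 + u) % n))
        = ∑ u ∈ Finset.range n, A ((k + (u + 1)) % n) := by
          apply Finset.sum_congr rfl; intro u _; ring_nf
      _ = ∑ u ∈ Finset.range n, A (u % n) := by rw [h1, ih]

theorem perfect_binary_length_square (n : ℕ) (A : ℕ → ℤ)
    (hA : ∀ k < n, A k = 1 ∨ A k = -1)
    (hperf : ∀ u, 0 < u → u < n →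
      (∑ k ∈ Finset.range n, A k * A ((k + u) % n)) = 0) :
    (n : ℤ) = (∑ k ∈ Finset.range n, A k) ^ 2 ∧
      (1 < n → Even (∑ k ∈ Finset.range n, A k)) := by
  rcases Nat.eq_zero_or_pos n with hn0 | hn0
  · subst hn0; simp
  set S := ∑ k ∈ Finset.range n, A k with hS
  have hmodsum : (∑ u ∈ Finset.range n, A (u % n)) = S := by
    apply Finset.sum_congr rfl
    intro u hu; rw [Nat.mod_eq_of_lt (Finset.mem_range.mp hu)]
  have key : S ^ 2 = ∑ u ∈ Finset.range n, ∑ k ∈ Finset.range n, A k * A ((k + u) % n) := by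
    rw [Finset.sum_comm]
    calc S ^ 2 = ∑ k ∈ Finset.range n, A k * S := by
          rw [← Finset.sum_mul]; ring
      _ = ∑ k ∈ Finset.range n, ∑ u ∈ Finset.range n, A k * A ((k + u) % n) := by
          apply Finset.sum_congr rfl
          intro k _
          rw [← Finset.mul_sum, shift_sum n A k, hmodsum]
  have hR0 : (∑ k ∈ Finset.range n, A k * A ((k + 0) % n)) = (n : ℤ) := by
    have h1 : ∀ k ∈ Finset.range n, A k * A ((k + 0) % n) = 1 := by
      intro k hk
      have hk := Finset.mem_range.mp hk
      rcases hA k hk with h | h <;> simp [Nat.mod_eq_of_lt hk, h]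
    rw [Finset.sum_congr rfl h1]
    simp
  have hsum : (∑ u ∈ Finset.range n, ∑ k ∈ Finset.range n, A k * A ((k + u) % n)) = (n : ℤ) := by
    rw [Finset.sum_eq_single 0]
    · exact hR0
    · intro u hu hune
      exact hperf u (Nat.pos_of_ne_zero hune) (Finset.mem_range.mp hu)
    · intro h; exact absurd (Finset.mem_range.mpr hn0) h
  have hmain : (n : ℤ) = S ^ 2 := by rw [key, hsum]
  refine ⟨hmain, fun hn1 => ?_⟩
  -- parity: R_1 = 0 and each term is odd, so n is even
  have hR1 : (∑ k ∈ Finset.range n, A k * A ((k + 1) % n)) = 0 := hperf 1 one_pos hn1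
  have hterm : ∀ k ∈ Finset.range n, (A k * A ((k + 1) % n)) % 2 = 1 := by
    intro k hk
    have hk' := Finset.mem_range.mp hk
    have h2 : (k + 1) % n < n := Nat.mod_lt _ hn0
    rcases hA k hk' with h | h <;> rcases hA _ h2 with h' | h' <;> simp [h, h']
  have hpar : (0 : ℤ) % 2 = (n : ℤ) % 2 := by
    rw [← hR1, Finset.sum_int_mod, Finset.sum_congr rfl hterm]
    simp
  have hneven : Even ((n : ℤ)) := by
    rw [Int.even_iff]; omega
  rw [hmain, sq] at hneven
  rcases Int.even_mul.mp hneven with h | h <;> exact h
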